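/- The MaxSwap rule is antagonization consistent: for every profile P and every pair {a,b} ∈ MaxSwap(P), the pair {a,b} also belongs to MaxSwap(P^{ab}), where P^{ab} is the antagonization of P with respect to {a,b}. -/

import Mathlib

open Finset

/-- A profile assigns to each voter a ranking of the `m` candidates, i.e. a bijection
from the candidate set `C` to the positions `Fin m` (position `0` = most preferred,
so the 1-based position of `a` in the ranking `r` is `(r a : ℕ) + 1`). -/
abbrev Profile (V C : Type*) (m : ℕ) := V → C ≃ Fin m

/-- `dpos r a b` is `v(ab) = v(b) - v(a)`, the signed difference of the positions of
`b` and `a` in the ranking `r` (the `+1` shifts cancel). -/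
def dpos {C : Type*} {m : ℕ} (r : C ≃ Fin m) (a b : C) : ℤ :=
  ((r b : ℕ) : ℤ) - ((r a : ℕ) : ℤ)

/-- `Vab P a b` is `V^{a≻b}`, the set of voters that prefer `a` to `b`. -/
def Vab {V C : Type*} {m : ℕ} [Fintype V] (P : Profile V C m) (a b : C) : Finset V :=
  Finset.univ.filter (fun v => P v a < P v b)

/-- The MaxSwap score of the pair `{a,b}`:
`min(Σ_{v∈V^{a≻b}} v(ab), Σ_{v∈V^{b≻a}} v(ba))`. -/
def swapScore {V C : Type*} {m : ℕ} [Fintype V] (P : Profile V C m) (a b : C) : ℤ :=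
  min (∑ v ∈ Vab P a b, dpos (P v) a b) (∑ v ∈ Vab P b a, dpos (P v) b a)

/-- `{a,b} ∈ MaxSwap(P)`: a pair of distinct candidates whose MaxSwap score is maximal
among all pairs of distinct candidates. -/
def maxSwapSel {V C : Type*} {m : ℕ} [Fintype V] (P : Profile V C m) (a b : C) : Prop :=
  a ≠ b ∧ ∀ x y : C, x ≠ y → swapScore P x y ≤ swapScore P a b

/-- `Q` is the antagonization `P^{ab}` of `P` with respect to the pair of distinct
candidates `{a,b}`: every voter of `V^{a≻b}` ranks `a` first (1-based position `1`,
i.e. `Fin`-value `0`) and `b` last (1-based position `m`, i.e. `Fin`-value `m - 1`),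
every voter of `V^{b≻a}` ranks `b` first and `a` last, and each voter's relative
order over the remaining candidates is the same as in `P`. -/
def IsAntagonization {V C : Type*} {m : ℕ} (P Q : Profile V C m) (a b : C) : Prop :=
  (∀ v : V, P v a < P v b → (Q v a : ℕ) = 0 ∧ (Q v b : ℕ) = m - 1) ∧
  (∀ v : V, P v b < P v a → (Q v b : ℕ) = 0 ∧ (Q v a : ℕ) = m - 1) ∧
  (∀ v : V, ∀ c d : C, c ≠ a → c ≠ b → d ≠ a → d ≠ b →
    (P v c < P v d ↔ Q v c < Q v d))

/-- Auxiliary: antagonizing with respect to `{a,b}` cannot increase the positional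
gap between two candidates distinct from `a` and `b`. -/
lemma dpos_le_of_mid {C : Type*} {m : ℕ} (r s : C ≃ Fin m) (a b x y : C)
    (hxa : x ≠ a) (hxb : x ≠ b) (hya : y ≠ a) (hyb : y ≠ b)
    (hiff : ∀ c d : C, c ≠ a → c ≠ b → d ≠ a → d ≠ b → (r c < r d ↔ s c < s d))
    (hone : ∀ c : C, c ≠ a → c ≠ b → 1 ≤ (s c : ℕ) ∧ (s c : ℕ) ≤ m - 2)
    (hsa : (s a : ℕ) = 0 ∨ (s a : ℕ) = m - 1)
    (hsb : (s b : ℕ) = 0 ∨ (s b : ℕ) = m - 1)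
    (hm : 2 ≤ m)
    (hxy : r x < r y) : dpos s x y ≤ dpos r x y := by
  have hsxy : s x < s y := (hiff x y hxa hxb hya hyb).mp hxy
  obtain ⟨hx1, hx2⟩ := hone x hxa hxb
  obtain ⟨hy1, hy2⟩ := hone y hya hyb
  have hcard : (Finset.Ioc (s x) (s y)).card ≤ (Finset.Ioc (r x) (r y)).card := by
    apply Finset.card_le_card_of_injOn (fun k => r (s.symm k))
    · intro k hk
      rw [Finset.mem_coe, Finset.mem_Ioc] at hk ⊢
      set c := s.symm k with hc
      have hck : s c = k := s.apply_symm_apply k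
      have h1 : (s x : ℕ) < (k : ℕ) := hk.1
      have h2 : (k : ℕ) ≤ (s y : ℕ) := hk.2
      have hca : c ≠ a := by
        intro h
        have h3 : (s a : ℕ) = (k : ℕ) := by rw [← h, hck]
        rcases hsa with h0 | h0 <;> omega
      have hcb : c ≠ b := by
        intro h
        have h3 : (s b : ℕ) = (k : ℕ) := by rw [← h, hck]
        rcases hsb with h0 | h0 <;> omega
      refine ⟨(hiff x c hxa hxb hca hcb).mpr (by rw [hck]; exact hk.1), ?_⟩
      by_contra hlt
      push_neg at hlt
      have h4 := (hiff y c hya hyb hca hcb).mp hlt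
      rw [hck] at h4
      exact absurd hk.2 (not_le.mpr h4)
    · intro k1 _ k2 _ he
      exact s.symm.injective (r.injective he)
  rw [Fin.card_Ioc, Fin.card_Ioc] at hcard
  have h5 : (r x : ℕ) < (r y : ℕ) := hxy
  have h6 : (s x : ℕ) < (s y : ℕ) := hsxy
  simp only [dpos]
  omega

/-- maxSwap is antagonization consistent: if the pair `{a,b}` is
selected by maxSwap in `P`, then it is also selected in the antagonization `P^{ab}`. -/
theorem maxSwap_antagonizationConsistent {V C : Type*} [Fintype V] {m : ℕ}
    (P Q : Profile V C m) (a b : C) (hab : a ≠ b)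
    (hQ : IsAntagonization P Q a b) (hsel : maxSwapSel P a b) :
    maxSwapSel Q a b := by
  obtain ⟨hQ1, hQ2, hQ3⟩ := hQ
  obtain ⟨-, hmax⟩ := hsel
  have tri : ∀ v : V, P v a < P v b ∨ P v b < P v a := fun v =>
    lt_or_gt_of_ne (fun h : P v a = P v b => hab ((P v).injective h))
  have hm : ∀ _ : V, 2 ≤ m := by
    intro v
    have hne : (Q v a : ℕ) ≠ (Q v b : ℕ) :=
      fun he => hab ((Q v).injective (Fin.val_injective he))
    have h1 := (Q v b).isLt
    have h2 := (Q v a).isLt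
    rcases tri v with h | h
    · obtain ⟨e0, e1⟩ := hQ1 v h; omega
    · obtain ⟨e0, e1⟩ := hQ2 v h; omega
  have hmidb : ∀ v : V, ∀ c : C, c ≠ a → c ≠ b → 1 ≤ (Q v c : ℕ) ∧ (Q v c : ℕ) ≤ m - 2 := by
    intro v c hca hcb
    have hna : (Q v c : ℕ) ≠ (Q v a : ℕ) :=
      fun he => hca ((Q v).injective (Fin.val_injective he))
    have hnb : (Q v c : ℕ) ≠ (Q v b : ℕ) :=
      fun he => hcb ((Q v).injective (Fin.val_injective he))
    have hlt := (Q v c).isLt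
    have h2 := hm v
    rcases tri v with h | h
    · obtain ⟨e0, e1⟩ := hQ1 v h; omega
    · obtain ⟨e0, e1⟩ := hQ2 v h; omega
  have hQab : ∀ v : V, P v a < P v b → Q v a < Q v b ∧ dpos (Q v) a b = (m : ℤ) - 1 := by
    intro v h
    obtain ⟨e0, e1⟩ := hQ1 v h
    have h2 := hm v
    refine ⟨by rw [Fin.lt_def, e0, e1]; omega, by simp only [dpos, e0, e1]; omega⟩
  have hQba : ∀ v : V, P v b < P v a → Q v b < Q v a ∧ dpos (Q v) b a = (m : ℤ) - 1 := by
    intro v h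
    obtain ⟨e0, e1⟩ := hQ2 v h
    have h2 := hm v
    refine ⟨by rw [Fin.lt_def, e0, e1]; omega, by simp only [dpos, e0, e1]; omega⟩
  have hVab : Vab Q a b = Vab P a b := by
    unfold Vab
    apply Finset.filter_congr
    intro v _
    constructor
    · intro hq
      rcases tri v with h | h
      · exact h
      · exact absurd hq (asymm (hQba v h).1)
    · exact fun h => (hQab v h).1
  have hVba : Vab Q b a = Vab P b a := by
    unfold Vab
    apply Finset.filter_congr
    intro v _
    constructor
    · intro hq
      rcases tri v with h | h
      · exact absurd hq (asymm (hQab v h).1)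
      · exact h
    · exact fun h => (hQba v h).1
  have hdP : ∀ (r : C ≃ Fin m) (x y : C), dpos r x y ≤ (m : ℤ) - 1 := by
    intro r x y
    have h1 := (r y).isLt
    have h2 := (r x).isLt
    simp only [dpos]; omega
  have hscoreab : swapScore P a b ≤ swapScore Q a b := by
    unfold swapScore
    rw [hVab, hVba]
    apply min_le_min
    · apply Finset.sum_le_sum
      intro v hv
      have h : P v a < P v b := by simpa [Vab] using hv
      rw [(hQab v h).2]
      exact hdP _ _ _
    · apply Finset.sum_le_sum
      intro v hv
      have h : P v b < P v a := by simpa [Vab] using hv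
      rw [(hQba v h).2]
      exact hdP _ _ _
  have hsaQ : ∀ v : V, (Q v a : ℕ) = 0 ∨ (Q v a : ℕ) = m - 1 := by
    intro v
    rcases tri v with h | h
    · exact Or.inl (hQ1 v h).1
    · exact Or.inr (hQ2 v h).2
  have hsbQ : ∀ v : V, (Q v b : ℕ) = 0 ∨ (Q v b : ℕ) = m - 1 := by
    intro v
    rcases tri v with h | h
    · exact Or.inr (hQ1 v h).2
    · exact Or.inl (hQ2 v h).1
  -- case `x = a`, `y ∉ {a,b}`
  have keyA : ∀ y : C, y ≠ a → y ≠ b → swapScore Q a y ≤ swapScore Q a b := by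
    intro y hya hyb
    have e1 : Vab Q a y = Vab P a b := by
      unfold Vab
      apply Finset.filter_congr
      intro v _
      obtain ⟨hy1, hy2⟩ := hmidb v y hya hyb
      have h2 := hm v
      rcases tri v with h | h
      · obtain ⟨e0, _⟩ := hQ1 v h
        exact iff_of_true (by rw [Fin.lt_def, e0]; omega) h
      · obtain ⟨_, e1⟩ := hQ2 v h
        exact iff_of_false (by rw [Fin.lt_def, e1]; omega) (asymm h)
    have e2 : Vab Q y a = Vab P b a := by
      unfold Vab
      apply Finset.filter_congr
      intro v _
      obtain ⟨hy1, hy2⟩ := hmidb v y hya hyb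
      have h2 := hm v
      rcases tri v with h | h
      · obtain ⟨e0, _⟩ := hQ1 v h
        exact iff_of_false (by rw [Fin.lt_def, e0]; omega) (asymm h)
      · obtain ⟨_, e1⟩ := hQ2 v h
        exact iff_of_true (by rw [Fin.lt_def, e1]; omega) h
    unfold swapScore
    rw [e1, e2, hVab, hVba]
    apply min_le_min
    · apply Finset.sum_le_sum
      intro v hv
      have h : P v a < P v b := by simpa [Vab] using hv
      obtain ⟨e0, e1⟩ := hQ1 v h
      obtain ⟨hy1, hy2⟩ := hmidb v y hya hyb
      have h2 := hm v
      simp only [dpos, e0, e1]; omega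
    · apply Finset.sum_le_sum
      intro v hv
      have h : P v b < P v a := by simpa [Vab] using hv
      obtain ⟨e0, e1⟩ := hQ2 v h
      obtain ⟨hy1, hy2⟩ := hmidb v y hya hyb
      have h2 := hm v
      simp only [dpos, e0, e1]; omega
  -- case `x = b`, `y ∉ {a,b}`
  have keyB : ∀ y : C, y ≠ a → y ≠ b → swapScore Q b y ≤ swapScore Q a b := by
    intro y hya hyb
    have e1 : Vab Q b y = Vab P b a := by
      unfold Vab
      apply Finset.filter_congr
      intro v _
      obtain ⟨hy1, hy2⟩ := hmidb v y hya hyb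
      have h2 := hm v
      rcases tri v with h | h
      · obtain ⟨_, e1⟩ := hQ1 v h
        exact iff_of_false (by rw [Fin.lt_def, e1]; omega) (asymm h)
      · obtain ⟨e0, _⟩ := hQ2 v h
        exact iff_of_true (by rw [Fin.lt_def, e0]; omega) h
    have e2 : Vab Q y b = Vab P a b := by
      unfold Vab
      apply Finset.filter_congr
      intro v _
      obtain ⟨hy1, hy2⟩ := hmidb v y hya hyb
      have h2 := hm v
      rcases tri v with h | h
      · obtain ⟨_, e1⟩ := hQ1 v h
        exact iff_of_true (by rw [Fin.lt_def, e1]; omega) h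
      · obtain ⟨e0, _⟩ := hQ2 v h
        exact iff_of_false (by rw [Fin.lt_def, e0]; omega) (asymm h)
    unfold swapScore
    rw [e1, e2, hVab, hVba]
    refine le_min ((min_le_right _ _).trans ?_) ((min_le_left _ _).trans ?_)
    · apply Finset.sum_le_sum
      intro v hv
      have h : P v a < P v b := by simpa [Vab] using hv
      obtain ⟨e0, e1⟩ := hQ1 v h
      obtain ⟨hy1, hy2⟩ := hmidb v y hya hyb
      have h2 := hm v
      simp only [dpos, e0, e1]; omega
    · apply Finset.sum_le_sum
      intro v hv
      have h : P v b < P v a := by simpa [Vab] using hv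
      obtain ⟨e0, e1⟩ := hQ2 v h
      obtain ⟨hy1, hy2⟩ := hmidb v y hya hyb
      have h2 := hm v
      simp only [dpos, e0, e1]; omega
  -- case `x, y ∉ {a,b}`
  have keyM : ∀ x y : C, x ≠ y → x ≠ a → x ≠ b → y ≠ a → y ≠ b →
      swapScore Q x y ≤ swapScore Q a b := by
    intro x y hxy hxa hxb hya hyb
    have h1 : swapScore Q x y ≤ swapScore P x y := by
      have exy : Vab Q x y = Vab P x y := by
        unfold Vab
        apply Finset.filter_congr
        intro v _
        exact (hQ3 v x y hxa hxb hya hyb).symm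
      have eyx : Vab Q y x = Vab P y x := by
        unfold Vab
        apply Finset.filter_congr
        intro v _
        exact (hQ3 v y x hya hyb hxa hxb).symm
      unfold swapScore
      rw [exy, eyx]
      apply min_le_min
      · apply Finset.sum_le_sum
        intro v hv
        have h : P v x < P v y := by simpa [Vab] using hv
        exact dpos_le_of_mid (P v) (Q v) a b x y hxa hxb hya hyb
          (fun c d => hQ3 v c d) (fun c => hmidb v c) (hsaQ v) (hsbQ v) (hm v) h
      · apply Finset.sum_le_sum
        intro v hv
        have h : P v y < P v x := by simpa [Vab] using hv
        exact dpos_le_of_mid (P v) (Q v) a b y x hya hyb hxa hxb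
          (fun c d => hQ3 v c d) (fun c => hmidb v c) (hsaQ v) (hsbQ v) (hm v) h
    exact h1.trans ((hmax x y hxy).trans hscoreab)
  have hcomm : ∀ (R : Profile V C m) (x y : C), swapScore R x y = swapScore R y x := by
    intro R x y
    unfold swapScore
    exact min_comm _ _
  refine ⟨hab, ?_⟩
  intro x y hxy
  by_cases hxa : x = a
  · by_cases hyb : y = b
    · rw [hxa, hyb]
    · have hya : y ≠ a := fun h => hxy (hxa.trans h.symm)
      rw [hxa]
      exact keyA y hya hyb
  · by_cases hxb : x = b
    · by_cases hya : y = a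
      · rw [hxb, hya, hcomm Q b a]
      · have hyb : y ≠ b := fun h => hxy (hxb.trans h.symm)
        rw [hxb]
        exact keyB y hya hyb
    · by_cases hya : y = a
      · rw [hya, hcomm Q x a]
        exact keyA x hxa hxb
      · by_cases hyb : y = b
        · rw [hyb, hcomm Q x b]
          exact keyB x hxa hxb
        · exact keyM x y hxy hxa hxb hya hyb
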